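/- Let R be a commutative ring, a, b ∈ R, and let u, z ∈ R be invertible with inverses u⁻¹, z⁻¹. Let D(z) denote the diagonal 2×2 matrix with diagonal entries z and z⁻¹. Then D(z⁻¹)·η(a)·η(u)·η(b)·D(z) = η(a·z⁻² − (z⁻²−1)·u⁻¹)·η(u)·η(z²·b − (z²−1)·u⁻¹). -/
import Mathlib

/-- The matrix `η(c) = !![c, -1; 1, 0]` over a commutative ring. -/
def etaR {R : Type*} [CommRing R] (c : R) : Matrix (Fin 2) (Fin 2) R := !![c, -1; 1, 0]

/-- Conjugating `η(a)·η(u)·η(b)` by the diagonal matrix `D(z) = diag(z, z⁻¹)`: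
`D(z⁻¹)·η(a)·η(u)·η(b)·D(z) = η(a·z⁻² − (z⁻²−1)·u⁻¹)·η(u)·η(z²·b − (z²−1)·u⁻¹)`. -/
theorem stmt12 {R : Type*} [CommRing R] (a b u z : R)
    [Invertible u] [Invertible z] :
    Matrix.diagonal ![⅟z, z] * etaR a * etaR u * etaR b * Matrix.diagonal ![z, ⅟z] =
      etaR (a * (⅟z) ^ 2 - ((⅟z) ^ 2 - 1) * ⅟u) * etaR u *
        etaR (z ^ 2 * b - (z ^ 2 - 1) * ⅟u) := by
  have hu : u * ⅟u = 1 := mul_invOf_self u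
  have hz : z * ⅟z = 1 := mul_invOf_self z
  ext i j
  fin_cases i <;> fin_cases j <;>
    simp [etaR, Matrix.mul_apply, Fin.sum_univ_two, Matrix.diagonal]
  · linear_combination
      ((⅟z)^2 * z^2 * (a + b - ⅟u) - a * (⅟z)^2 - b * z^2 + ⅟u * (⅟z)^2 + ⅟u * z^2 - ⅟u) * hu
        + ((a + b - ⅟u - a * b * u) * z * ⅟z - ⅟u) * hz
  · linear_combination (1 - (⅟z)^2) * hu
  · linear_combination (z^2 - 1) * hu
  · linear_combination u * hz
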